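/- arXiv:1403.5667 — 2 statements merged into one kernel-verified Lean document; each statement's English description precedes it below -/
import Mathlib

section
/- For the HREM with σ > 0, the quenched free energy is uniformly bounded above: f_{k+1} ≤ (β²/2)·1/(2^σ - 1) + E[log Σ_{S=±1} exp(-β ε_0[S])] for all k. -/
open MeasureTheory ProbabilityTheory Real Filter

/-- A configuration of `2 ^ n` Ising spins (each spin is a Boolean). -/
abbrev Cfg (n : ℕ) : Type := Fin (2 ^ n) → Bool

/-- The left half of a spin configuration. -/
def blkL {n : ℕ} (S : Cfg (n + 1)) : Cfg n :=
  fun i => S ⟨i.1, lt_of_lt_of_le i.2 (Nat.pow_le_pow_right (by norm_num) (Nat.le_succ n))⟩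

/-- The right half of a spin configuration. -/
def blkR {n : ℕ} (S : Cfg (n + 1)) : Cfg n :=
  fun i => S ⟨2 ^ n + i.1, by have := i.2; rw [pow_succ]; omega⟩

variable {Ω : Type} [MeasurableSpace Ω]

/-- The Hamiltonian of the hierarchical random energy model (HREM), defined recursively:
`H_{n+1}[S] = H_n¹[S₁] + H_n²[S₂] + 2^{(n+1)(1-σ)/2} ε_{n+1}[S]`, `H_0[S] = ε_0[S]`,
where the second argument indexes the hierarchical block (the two sub-blocks of block `j`
are `2j` and `2j+1`), so that the two half-Hamiltonians use disjoint (hence independent)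
families of random energies. -/
noncomputable def hremH (σ : ℝ) (ε : ∀ l : ℕ, ℕ → Cfg l → Ω → ℝ) :
    ∀ n : ℕ, ℕ → Cfg n → Ω → ℝ
  | 0 => fun j S => ε 0 j S
  | (n + 1) => fun j S ω =>
      hremH σ ε n (2 * j) (blkL S) ω + hremH σ ε n (2 * j + 1) (blkR S) ω
        + (2 : ℝ) ^ (((n : ℝ) + 1) * (1 - σ) / 2) * ε (n + 1) j S ω

/-- The partition function `Z_n = ∑_S exp (-β H_n[S])` of the HREM. -/
noncomputable def hremZ (σ : ℝ) (ε : ∀ l : ℕ, ℕ → Cfg l → Ω → ℝ) (β : ℝ) (n : ℕ)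
    (ω : Ω) : ℝ :=
  ∑ S : Cfg n, Real.exp (-β * hremH σ ε n 0 S ω)

/-- The quenched free energy `f_n = 2^{-n} E[log Z_n]` of the HREM. -/
noncomputable def hremF (σ : ℝ) (ε : ∀ l : ℕ, ℕ → Cfg l → Ω → ℝ) (μ : Measure Ω)
    (β : ℝ) (n : ℕ) : ℝ :=
  ((2 : ℝ) ^ n)⁻¹ * ∫ ω, Real.log (hremZ σ ε β n ω) ∂μ





lemma HREM.gauss_pdf_shift (u x : ℝ) :
    gaussianPDFReal 0 1 x * Real.exp (u * x) = Real.exp (u ^ 2 / 2) * gaussianPDFReal u 1 x := by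
  simp only [gaussianPDFReal, NNReal.coe_one, mul_one]
  rw [mul_assoc, ← Real.exp_add, mul_comm (Real.exp (u ^ 2 / 2)), mul_assoc, ← Real.exp_add]
  congr 1
  ring

lemma HREM.gauss_integrable_exp (u : ℝ) :
    Integrable (fun x => Real.exp (u * x)) (gaussianReal 0 1) := by
  rw [gaussianReal_of_var_ne_zero 0 one_ne_zero]
  have hpdf : gaussianPDF 0 1 = fun x => ((Real.toNNReal (gaussianPDFReal 0 1 x) : NNReal) : ENNReal) := rfl
  rw [hpdf]
  rw [integrable_withDensity_iff_integrable_smul ((measurable_gaussianPDFReal 0 1).real_toNNReal)]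
  have : (fun x => (Real.toNNReal (gaussianPDFReal 0 1 x) : NNReal) • Real.exp (u * x))
      = fun x => Real.exp (u ^ 2 / 2) * gaussianPDFReal u 1 x := by
    funext x
    rw [NNReal.smul_def, Real.coe_toNNReal _ (gaussianPDFReal_nonneg 0 1 x)]
    exact HREM.gauss_pdf_shift u x
  rw [this]
  exact (integrable_gaussianPDFReal u 1).const_mul _

lemma HREM.gauss_integral_exp (u : ℝ) :
    ∫ x, Real.exp (u * x) ∂(gaussianReal 0 1) = Real.exp (u ^ 2 / 2) := by
  rw [gaussianReal_of_var_ne_zero 0 one_ne_zero]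
  have hpdf : gaussianPDF 0 1 = fun x => ((Real.toNNReal (gaussianPDFReal 0 1 x) : NNReal) : ENNReal) := rfl
  rw [hpdf, integral_withDensity_eq_integral_smul ((measurable_gaussianPDFReal 0 1).real_toNNReal)]
  have : (fun x => (Real.toNNReal (gaussianPDFReal 0 1 x) : NNReal) • Real.exp (u * x))
      = fun x => Real.exp (u ^ 2 / 2) * gaussianPDFReal u 1 x := by
    funext x
    rw [NNReal.smul_def, Real.coe_toNNReal _ (gaussianPDFReal_nonneg 0 1 x)]
    exact HREM.gauss_pdf_shift u x
  rw [this, integral_const_mul, integral_gaussianPDFReal_eq_one u one_ne_zero, mul_one]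

lemma HREM.gauss_integrable_id :
    Integrable (fun x : ℝ => x) (gaussianReal 0 1) := by
  refine Integrable.mono' ((HREM.gauss_integrable_exp 1).add (HREM.gauss_integrable_exp (-1)))
    aestronglyMeasurable_id (ae_of_all _ fun x => ?_)
  have h1 : |x| + 1 ≤ Real.exp |x| := Real.add_one_le_exp _
  have h2 : Real.exp |x| ≤ Real.exp (1 * x) + Real.exp (-1 * x) := by
    rcases abs_cases x with ⟨h, _⟩ | ⟨h, _⟩
    · rw [h, show (1 : ℝ) * x = x by ring]
      linarith [Real.exp_pos (-1 * x)]
    · rw [h, show (-1 : ℝ) * x = -x by ring]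
      linarith [Real.exp_pos (1 * x)]
  have h3 := (Real.exp_pos (1 * x)).le
  simp only [Real.norm_eq_abs, Pi.add_apply]
  linarith
section Part2
open MeasureTheory ProbabilityTheory Real

variable {Ω : Type*} [MeasurableSpace Ω] {μ : Measure Ω}

lemma HREM.iIndepFun_reindex {ι κ : Type*} {β : ι → Type*} [m : ∀ i, MeasurableSpace (β i)]
    {f : ∀ i, Ω → β i} (g : κ → ι) (hg : Function.Injective g)
    (hf : iIndepFun f μ) :
    iIndepFun (fun k => f (g k)) μ := by
  classical
  rw [iIndepFun_iff]
  intro s f' hf'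
  have key : ∀ k ∈ s, (⋂ k' ∈ s.filter (fun k' => g k' = g k), f' k') = f' k := by
    intro k hk
    have : s.filter (fun k' => g k' = g k) = {k} := by
      ext k'
      simp only [Finset.mem_filter, Finset.mem_singleton, hg.eq_iff]
      exact ⟨fun h => h.2, fun h => ⟨h ▸ hk, h⟩⟩
    rw [this]
    simp
  have h := (iIndepFun_iff _ _ _).1 hf (s.image g)
    (f' := fun i => ⋂ k ∈ s.filter (fun k' => g k' = i), f' k) ?_
  · have hset : (⋂ i ∈ s.image g, ⋂ k ∈ s.filter (fun k' => g k' = i), f' k) = ⋂ k ∈ s, f' k := by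
      ext ω
      simp only [Set.mem_iInter, Finset.mem_image, Finset.mem_filter]
      constructor
      · intro h k hk
        exact h (g k) ⟨k, hk, rfl⟩ k ⟨hk, rfl⟩
      · rintro h i ⟨k0, hk0, rfl⟩ k ⟨hk, _⟩
        exact h k hk
    rw [hset] at h
    rw [h, Finset.prod_image (fun a _ b _ hab => hg hab)]
    exact Finset.prod_congr rfl fun k hk => by rw [key k hk]
  · intro i hi
    refine MeasurableSet.biInter (Finset.countable_toSet _) fun k hk => ?_
    rcases Finset.mem_filter.1 hk with ⟨hks, hgk⟩
    exact hgk ▸ hf' k hks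

lemma HREM.map_pi_gauss {κ : Type*} [Fintype κ] {X : κ → Ω → ℝ}
    (hXm : ∀ k, Measurable (X k))
    (hX : iIndepFun X μ)
    (hg : ∀ k, μ.map (X k) = gaussianReal 0 1) :
    μ.map (fun ω k => X k ω) = Measure.pi (fun _ => gaussianReal 0 1) := by
  refine (Measure.pi_eq fun s hs => ?_).symm
  rw [Measure.map_apply (measurable_pi_lambda _ hXm) (MeasurableSet.univ_pi hs)]
  have hpre : (fun ω k => X k ω) ⁻¹' Set.pi Set.univ s = ⋂ k, X k ⁻¹' s k := by
    ext ω; simp [Set.mem_pi]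
  rw [hpre, hX.meas_iInter fun k => ⟨s k, hs k, rfl⟩]
  exact Finset.prod_congr rfl fun k _ => by
    rw [← hg k, Measure.map_apply (hXm k) (hs k)]

lemma HREM.pi_map_eval {κ : Type*} [Fintype κ] (k : κ) :
    (Measure.pi fun _ : κ => gaussianReal 0 1).map (Function.eval k) = gaussianReal 0 1 := by
  classical
  ext s hs
  rw [Measure.map_apply (measurable_pi_apply k) hs, Set.eval_preimage, Measure.pi_pi,
    Fintype.prod_eq_single k (fun j hj => by rw [Function.update_of_ne hj]; simp),
    Function.update_self]

lemma HREM.pi_integrable_exp {κ : Type*} [Fintype κ] (k : κ) (u : ℝ) :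
    Integrable (fun x : κ → ℝ => Real.exp (u * x k)) (Measure.pi fun _ => gaussianReal 0 1) := by
  have h := HREM.gauss_integrable_exp u
  rw [← HREM.pi_map_eval (κ := κ) k] at h
  exact (integrable_map_measure ((measurable_id.const_mul u).exp.aestronglyMeasurable)
    (measurable_pi_apply k).aemeasurable).1 h

lemma HREM.pi_integral_exp {κ : Type*} [Fintype κ] (k : κ) (u : ℝ) :
    ∫ x : κ → ℝ, Real.exp (u * x k) ∂(Measure.pi fun _ => gaussianReal 0 1)
      = Real.exp (u ^ 2 / 2) := by
  have h := integral_map (μ := Measure.pi fun _ : κ => gaussianReal 0 1)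
    (φ := Function.eval k) (measurable_pi_apply k).aemeasurable
    (f := fun t => Real.exp (u * t)) ((measurable_id.const_mul u).exp.aestronglyMeasurable)
  rw [HREM.pi_map_eval, HREM.gauss_integral_exp] at h
  exact h.symm

lemma HREM.jensen_gauss {κ : Type*} [Fintype κ] [Nonempty κ] (w : κ → ℝ) (hw : ∀ S, 0 < w S)
    (u : ℝ)
    (hint : Integrable (fun x : κ → ℝ => Real.log (∑ S, w S * Real.exp (u * x S)))
      (Measure.pi fun _ => gaussianReal 0 1)) :
    ∫ x : κ → ℝ, Real.log (∑ S, w S * Real.exp (u * x S))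
        ∂(Measure.pi fun _ => gaussianReal 0 1)
      ≤ u ^ 2 / 2 + Real.log (∑ S, w S) := by
  set P := Measure.pi fun _ : κ => gaussianReal 0 1 with hP
  have : IsProbabilityMeasure P := by rw [hP]; infer_instance
  set f : (κ → ℝ) → ℝ := fun x => ∑ S, w S * Real.exp (u * x S) with hf
  have hwsum : 0 < ∑ S, w S := Finset.sum_pos (fun S _ => hw S) Finset.univ_nonempty
  have hfpos : ∀ x, 0 < f x :=
    fun x => Finset.sum_pos (fun S _ => mul_pos (hw S) (Real.exp_pos _)) Finset.univ_nonempty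
  have hterm : ∀ S : κ, Integrable (fun x : κ → ℝ => w S * Real.exp (u * x S)) P :=
    fun S => (HREM.pi_integrable_exp S u).const_mul (w S)
  have hfint : Integrable f P := integrable_finset_sum _ fun S _ => hterm S
  set m : ℝ := Real.exp (u ^ 2 / 2) * ∑ S, w S with hm
  have hIm : ∫ x, f x ∂P = m := by
    rw [hf, integral_finset_sum _ fun S _ => hterm S]
    have : ∀ S : κ, ∫ x, w S * Real.exp (u * x S) ∂P = w S * Real.exp (u ^ 2 / 2) := by
      intro S
      rw [integral_const_mul, HREM.pi_integral_exp]
    rw [Finset.sum_congr rfl fun S _ => this S, ← Finset.sum_mul, mul_comm]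
  have hmpos : 0 < m := mul_pos (Real.exp_pos _) hwsum
  have hle : ∀ x, Real.log (f x) ≤ Real.log m + (f x / m - 1) := by
    intro x
    have h2 : Real.log (f x / m) = Real.log (f x) - Real.log m :=
      Real.log_div (hfpos x).ne' hmpos.ne'
    have h3 : Real.log (f x / m) ≤ f x / m - 1 :=
      Real.log_le_sub_one_of_pos (div_pos (hfpos x) hmpos)
    linarith
  have hg1 : Integrable (fun x => f x / m) P := hfint.div_const m
  have hg : Integrable (fun x => f x / m - 1) P := by
    exact hg1.sub (integrable_const 1)
  have hrint : Integrable (fun x => Real.log m + (f x / m - 1)) P := by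
    simpa using (integrable_const (Real.log m) (μ := P)).add hg
  have hmono := integral_mono hint hrint hle
  have hright : ∫ x, (Real.log m + (f x / m - 1)) ∂P = Real.log m := by
    rw [integral_add (integrable_const _) hg, integral_const,
      integral_sub hg1 (integrable_const 1), integral_div, hIm, integral_const,
      div_self hmpos.ne']
    simp
  have hlogm : Real.log m = u ^ 2 / 2 + Real.log (∑ S, w S) := by
    rw [hm, Real.log_mul (Real.exp_pos _).ne' hwsum.ne', Real.log_exp]
  rw [hright, hlogm] at hmono
  exact hmono

end Part2
section Part3
open MeasureTheory ProbabilityTheory Real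

abbrev HREM.Idx : Type := Σ l : ℕ, ℕ × Cfg l

variable {Ω : Type} [MeasurableSpace Ω] {μ : Measure Ω} {σ β : ℝ}
  {ε : ∀ l : ℕ, ℕ → Cfg l → Ω → ℝ}

/-- Partition function of block `j` at level `n`. -/
noncomputable def HREM.Zn (σ : ℝ) (ε : ∀ l : ℕ, ℕ → Cfg l → Ω → ℝ) (β : ℝ) (n j : ℕ)
    (ω : Ω) : ℝ :=
  ∑ S : Cfg n, Real.exp (-β * hremH σ ε n j S ω)

lemma HREM.hremH_meas (hmeas : ∀ l j c, Measurable (ε l j c)) :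
    ∀ n j S, Measurable (hremH σ ε n j S) := by
  intro n
  induction n with
  | zero => intro j S; exact hmeas 0 j S
  | succ n ih =>
    intro j S
    simp only [hremH]
    exact ((ih _ _).add (ih _ _)).add ((hmeas _ _ _).const_mul _)

/-- σ-algebra generated by the energies of levels `≤ n`. -/
def HREM.lowS (ε : ∀ l : ℕ, ℕ → Cfg l → Ω → ℝ) (n : ℕ) : MeasurableSpace Ω :=
  ⨆ q ∈ {q : HREM.Idx | q.1 ≤ n}, MeasurableSpace.comap (ε q.1 q.2.1 q.2.2) inferInstance

/-- σ-algebra generated by the energies of levels `> n`. -/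
def HREM.highS (ε : ∀ l : ℕ, ℕ → Cfg l → Ω → ℝ) (n : ℕ) : MeasurableSpace Ω :=
  ⨆ q ∈ {q : HREM.Idx | n < q.1}, MeasurableSpace.comap (ε q.1 q.2.1 q.2.2) inferInstance

lemma HREM.eps_meas_low {n l : ℕ} (hl : l ≤ n) (j : ℕ) (S : Cfg l) :
    Measurable[HREM.lowS ε n] (ε l j S) := by
  refine measurable_iff_comap_le.2 ?_
  exact le_iSup₂ (f := fun (q : HREM.Idx) (_ : q ∈ {q : HREM.Idx | q.1 ≤ n}) =>
    MeasurableSpace.comap (ε q.1 q.2.1 q.2.2) inferInstance) (⟨l, j, S⟩ : HREM.Idx) hl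

lemma HREM.eps_meas_high {n l : ℕ} (hl : n < l) (j : ℕ) (S : Cfg l) :
    Measurable[HREM.highS ε n] (ε l j S) := by
  refine measurable_iff_comap_le.2 ?_
  exact le_iSup₂ (f := fun (q : HREM.Idx) (_ : q ∈ {q : HREM.Idx | n < q.1}) =>
    MeasurableSpace.comap (ε q.1 q.2.1 q.2.2) inferInstance) (⟨l, j, S⟩ : HREM.Idx) hl

lemma HREM.hremH_meas_low (n : ℕ) :
    ∀ m, m ≤ n → ∀ j S, Measurable[HREM.lowS ε n] (hremH σ ε m j S) := by
  intro m
  induction m with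
  | zero => intro hm j S; exact HREM.eps_meas_low hm j S
  | succ m ih =>
    intro hm j S
    simp only [hremH]
    exact ((ih (le_trans (Nat.le_succ m) hm) _ _).add
      (ih (le_trans (Nat.le_succ m) hm) _ _)).add
      ((HREM.eps_meas_low hm j S).const_mul _)

lemma HREM.indep_low_high {α γ : Type*} [MeasurableSpace α] [MeasurableSpace γ]
    (hmeas : ∀ l j c, Measurable (ε l j c))
    (hindep : iIndepFun (fun q : HREM.Idx => ε q.1 q.2.1 q.2.2) μ)
    (n : ℕ) {A : Ω → α} {X : Ω → γ}
    (hA : Measurable[HREM.lowS ε n] A) (hX : Measurable[HREM.highS ε n] X) :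
    IndepFun A X μ := by
  have h := indep_iSup_of_disjoint
    (m := fun q : HREM.Idx => MeasurableSpace.comap (ε q.1 q.2.1 q.2.2) inferInstance)
    (fun q => (hmeas q.1 q.2.1 q.2.2).comap_le) hindep.iIndep
    (S := {q : HREM.Idx | q.1 ≤ n}) (T := {q : HREM.Idx | n < q.1})
    (by
      rw [Set.disjoint_left]
      intro q hq hq'
      simp only [Set.mem_setOf_eq] at hq hq'
      omega)
  rw [IndepFun_iff_Indep]
  exact indep_of_indep_of_le_left
    (indep_of_indep_of_le_right h (measurable_iff_comap_le.1 hX))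
    (measurable_iff_comap_le.1 hA)

lemma HREM.hremH_rep (σ : ℝ) (ε : ∀ l : ℕ, ℕ → Cfg l → Ω → ℝ) :
    ∀ n j S, ∃ (I : Finset HREM.Idx) (c : HREM.Idx → ℝ),
      ∀ ω, hremH σ ε n j S ω = ∑ q ∈ I, c q * ε q.1 q.2.1 q.2.2 ω := by
  intro n
  induction n with
  | zero =>
    intro j S
    exact ⟨{⟨0, j, S⟩}, fun _ => 1, fun ω => by simp [hremH]⟩
  | succ n ih =>
    intro j S
    obtain ⟨I₁, c₁, h₁⟩ := ih (2 * j) (blkL S)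
    obtain ⟨I₂, c₂, h₂⟩ := ih (2 * j + 1) (blkR S)
    classical
    set q₀ : HREM.Idx := ⟨n + 1, j, S⟩ with hq₀
    refine ⟨(I₁ ∪ I₂) ∪ {q₀},
      fun q => (if q ∈ I₁ then c₁ q else 0) + (if q ∈ I₂ then c₂ q else 0)
        + (if q = q₀ then (2 : ℝ) ^ (((n : ℝ) + 1) * (1 - σ) / 2) else 0), fun ω => ?_⟩
    have expand : ∀ q : HREM.Idx,
        ((if q ∈ I₁ then c₁ q else 0) + (if q ∈ I₂ then c₂ q else 0)
          + (if q = q₀ then (2 : ℝ) ^ (((n : ℝ) + 1) * (1 - σ) / 2) else 0))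
          * ε q.1 q.2.1 q.2.2 ω
        = (if q ∈ I₁ then c₁ q * ε q.1 q.2.1 q.2.2 ω else 0)
          + (if q ∈ I₂ then c₂ q * ε q.1 q.2.1 q.2.2 ω else 0)
          + (if q = q₀ then (2 : ℝ) ^ (((n : ℝ) + 1) * (1 - σ) / 2) * ε q.1 q.2.1 q.2.2 ω
              else 0) := by
      intro q
      split_ifs <;> ring
    rw [Finset.sum_congr rfl fun q _ => expand q]
    rw [Finset.sum_add_distrib, Finset.sum_add_distrib]
    rw [Finset.sum_ite_mem, Finset.sum_ite_mem]
    have hI₁ : ((I₁ ∪ I₂) ∪ {q₀}) ∩ I₁ = I₁ := by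
      apply Finset.inter_eq_right.2
      intro q hq
      exact Finset.mem_union.2 (Or.inl (Finset.mem_union.2 (Or.inl hq)))
    have hI₂ : ((I₁ ∪ I₂) ∪ {q₀}) ∩ I₂ = I₂ := by
      apply Finset.inter_eq_right.2
      intro q hq
      exact Finset.mem_union.2 (Or.inl (Finset.mem_union.2 (Or.inr hq)))
    have hq₀mem : q₀ ∈ (I₁ ∪ I₂) ∪ {q₀} :=
      Finset.mem_union.2 (Or.inr (Finset.mem_singleton_self q₀))
    rw [hI₁, hI₂, Finset.sum_ite_eq' ((I₁ ∪ I₂) ∪ {q₀}), if_pos hq₀mem]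
    simp only [hremH, h₁ ω, h₂ ω]
    rfl
end Part3
section Part4
open MeasureTheory ProbabilityTheory Real

variable {Ω : Type} [MeasurableSpace Ω] {μ : Measure Ω} {σ β : ℝ}
  {ε : ∀ l : ℕ, ℕ → Cfg l → Ω → ℝ} [IsProbabilityMeasure μ]

lemma HREM.integrable_exp_eps (hmeas : ∀ l j c, Measurable (ε l j c))
    (hgauss : ∀ l j c, μ.map (ε l j c) = gaussianReal 0 1) (u : ℝ) (q : HREM.Idx) :
    Integrable (fun ω => Real.exp (u * ε q.1 q.2.1 q.2.2 ω)) μ := by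
  have h := HREM.gauss_integrable_exp u
  rw [← hgauss q.1 q.2.1 q.2.2] at h
  exact (integrable_map_measure ((measurable_id.const_mul u).exp.aestronglyMeasurable)
    (hmeas q.1 q.2.1 q.2.2).aemeasurable).1 h

lemma HREM.integrable_eps (hmeas : ∀ l j c, Measurable (ε l j c))
    (hgauss : ∀ l j c, μ.map (ε l j c) = gaussianReal 0 1) (q : HREM.Idx) :
    Integrable (fun ω => ε q.1 q.2.1 q.2.2 ω) μ := by
  have h := HREM.gauss_integrable_id
  rw [← hgauss q.1 q.2.1 q.2.2] at h
  exact (integrable_map_measure measurable_id.aestronglyMeasurable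
    (hmeas q.1 q.2.1 q.2.2).aemeasurable).1 h

lemma HREM.integrable_exp_lincomb (hmeas : ∀ l j c, Measurable (ε l j c))
    (hgauss : ∀ l j c, μ.map (ε l j c) = gaussianReal 0 1)
    (hindep : iIndepFun (fun q : HREM.Idx => ε q.1 q.2.1 q.2.2) μ)
    (I : Finset HREM.Idx) (c : HREM.Idx → ℝ) :
    Integrable (fun ω => Real.exp (∑ q ∈ I, c q * ε q.1 q.2.1 q.2.2 ω)) μ := by
  have hX : iIndepFun
      (fun q : HREM.Idx => fun ω => c q * ε q.1 q.2.1 q.2.2 ω) μ :=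
    hindep.comp (fun q x => c q * x) (fun q => measurable_id.const_mul (c q))
  have h := hX.integrable_exp_mul_sum (t := 1)
    (fun q => (hmeas q.1 q.2.1 q.2.2).const_mul (c q)) (s := I)
    (fun q _ => by
      have h0 := HREM.integrable_exp_eps hmeas hgauss (c q) q
      simpa [one_mul] using h0)
  simpa [Finset.sum_apply, one_mul] using h

lemma HREM.integrable_exp_H (hmeas : ∀ l j c, Measurable (ε l j c))
    (hgauss : ∀ l j c, μ.map (ε l j c) = gaussianReal 0 1)
    (hindep : iIndepFun (fun q : HREM.Idx => ε q.1 q.2.1 q.2.2) μ)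
    (t : ℝ) (n j : ℕ) (S : Cfg n) :
    Integrable (fun ω => Real.exp (t * hremH σ ε n j S ω)) μ := by
  obtain ⟨I, c, h⟩ := HREM.hremH_rep σ ε n j S
  have heq : (fun ω => Real.exp (t * hremH σ ε n j S ω))
      = fun ω => Real.exp (∑ q ∈ I, (t * c q) * ε q.1 q.2.1 q.2.2 ω) := by
    funext ω
    rw [h ω, Finset.mul_sum]
    congr 1
    exact Finset.sum_congr rfl fun q _ => by ring
  rw [heq]
  exact HREM.integrable_exp_lincomb hmeas hgauss hindep I _

lemma HREM.integrable_H (hmeas : ∀ l j c, Measurable (ε l j c))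
    (hgauss : ∀ l j c, μ.map (ε l j c) = gaussianReal 0 1) (n j : ℕ) (S : Cfg n) :
    Integrable (hremH σ ε n j S) μ := by
  obtain ⟨I, c, h⟩ := HREM.hremH_rep σ ε n j S
  have heq : hremH σ ε n j S = fun ω => ∑ q ∈ I, c q * ε q.1 q.2.1 q.2.2 ω := funext h
  rw [heq]
  exact integrable_finset_sum _ fun q _ => (HREM.integrable_eps hmeas hgauss q).const_mul _

lemma HREM.Zn_pos (n j : ℕ) (ω : Ω) : 0 < HREM.Zn σ ε β n j ω :=
  Finset.sum_pos (fun _ _ => Real.exp_pos _) Finset.univ_nonempty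

lemma HREM.Zn_meas (hmeas : ∀ l j c, Measurable (ε l j c)) (n j : ℕ) :
    Measurable (HREM.Zn σ ε β n j) :=
  Finset.measurable_sum _ fun S _ => ((HREM.hremH_meas hmeas n j S).const_mul (-β)).exp

lemma HREM.integrable_Zn (hmeas : ∀ l j c, Measurable (ε l j c))
    (hgauss : ∀ l j c, μ.map (ε l j c) = gaussianReal 0 1)
    (hindep : iIndepFun (fun q : HREM.Idx => ε q.1 q.2.1 q.2.2) μ)
    (n j : ℕ) : Integrable (HREM.Zn σ ε β n j) μ :=
  integrable_finset_sum _ fun S _ => HREM.integrable_exp_H hmeas hgauss hindep (-β) n j S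

lemma HREM.integrable_log_Zn (hmeas : ∀ l j c, Measurable (ε l j c))
    (hgauss : ∀ l j c, μ.map (ε l j c) = gaussianReal 0 1)
    (hindep : iIndepFun (fun q : HREM.Idx => ε q.1 q.2.1 q.2.2) μ)
    (n j : ℕ) : Integrable (fun ω => Real.log (HREM.Zn σ ε β n j ω)) μ := by
  have hZi := HREM.integrable_Zn (σ := σ) (β := β) hmeas hgauss hindep n j
  have hH := HREM.integrable_H (σ := σ) hmeas hgauss n j default
  have hbd : Integrable (fun ω => HREM.Zn σ ε β n j ω + |(-β) * hremH σ ε n j default ω|) μ := by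
    exact hZi.add (hH.const_mul (-β)).abs
  refine Integrable.mono' hbd ((HREM.Zn_meas (β := β) hmeas n j).log.aestronglyMeasurable)
    (ae_of_all _ fun ω => ?_)
  have hZpos := HREM.Zn_pos (σ := σ) (ε := ε) (β := β) n j ω
  have hsingle : Real.exp (-β * hremH σ ε n j default ω) ≤ HREM.Zn σ ε β n j ω :=
    Finset.single_le_sum (f := fun S => Real.exp (-β * hremH σ ε n j S ω))
      (fun S _ => (Real.exp_pos _).le) (Finset.mem_univ default)
  have hlow : -β * hremH σ ε n j default ω ≤ Real.log (HREM.Zn σ ε β n j ω) :=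
    (Real.le_log_iff_exp_le hZpos).2 hsingle
  have hup : Real.log (HREM.Zn σ ε β n j ω) ≤ HREM.Zn σ ε β n j ω - 1 :=
    Real.log_le_sub_one_of_pos hZpos
  have habs : -|(-β) * hremH σ ε n j default ω| ≤ -β * hremH σ ε n j default ω := by
    rw [show -β * hremH σ ε n j default ω = (-β) * hremH σ ε n j default ω from rfl]
    exact neg_abs_le _
  rw [Real.norm_eq_abs]
  rw [abs_le]
  constructor
  · have := abs_nonneg ((-β) * hremH σ ε n j default ω)
    nlinarith
  · have := abs_nonneg ((-β) * hremH σ ε n j default ω)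
    nlinarith

def HREM.glue (n : ℕ) (p : Cfg n × Cfg n) : Cfg (n + 1) := fun i =>
  if h : (i : ℕ) < 2 ^ n then p.1 ⟨i, h⟩
  else p.2 ⟨(i : ℕ) - 2 ^ n, by
    have h2 : (i : ℕ) < 2 ^ n * 2 := by rw [← pow_succ]; exact i.2
    omega⟩

def HREM.cfgEquiv (n : ℕ) : Cfg (n + 1) ≃ Cfg n × Cfg n where
  toFun S := (blkL S, blkR S)
  invFun := HREM.glue n
  left_inv S := by
    funext i
    simp only [HREM.glue]
    by_cases h : (i : ℕ) < 2 ^ n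
    · rw [dif_pos h]
      simp only [blkL]
    · rw [dif_neg h]
      simp only [blkR]
      exact congrArg S (Fin.ext (Nat.add_sub_cancel' (le_of_not_gt h)))
  right_inv p := by
    refine Prod.ext ?_ ?_
    · funext i
      simp only [blkL, HREM.glue]
      rw [dif_pos i.2]
    · funext i
      simp only [blkR, HREM.glue]
      rw [dif_neg (not_lt.2 (Nat.le_add_right (2 ^ n) (i : ℕ)))]
      exact congrArg p.2 (Fin.ext (show 2 ^ n + (i : ℕ) - 2 ^ n = (i : ℕ) by omega))

lemma HREM.sum_blk_mul (n : ℕ) (F G : Cfg n → ℝ) :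
    ∑ S : Cfg (n + 1), F (blkL S) * G (blkR S)
      = (∑ u : Cfg n, F u) * (∑ v : Cfg n, G v) := by
  calc ∑ S : Cfg (n + 1), F (blkL S) * G (blkR S)
      = ∑ p : Cfg n × Cfg n, F p.1 * G p.2 :=
        Equiv.sum_comp (HREM.cfgEquiv n) (fun p : Cfg n × Cfg n => F p.1 * G p.2)
    _ = (∑ u : Cfg n, F u) * (∑ v : Cfg n, G v) := by
        rw [Finset.sum_mul_sum]
        exact Fintype.sum_prod_type (f := fun p : Cfg n × Cfg n => F p.1 * G p.2)

lemma HREM.log_Z0_eq (hmeas : ∀ l j c, Measurable (ε l j c))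
    (hgauss : ∀ l j c, μ.map (ε l j c) = gaussianReal 0 1)
    (hindep : iIndepFun (fun q : HREM.Idx => ε q.1 q.2.1 q.2.2) μ)
    (j : ℕ) :
    ∫ ω, Real.log (HREM.Zn σ ε β 0 j ω) ∂μ = ∫ ω, Real.log (HREM.Zn σ ε β 0 0 ω) ∂μ := by
  have key : ∀ j' : ℕ, ∫ ω, Real.log (HREM.Zn σ ε β 0 j' ω) ∂μ
      = ∫ x : Cfg 0 → ℝ, Real.log (∑ S : Cfg 0, Real.exp (-β * x S))
          ∂(Measure.pi fun _ => gaussianReal 0 1) := by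
    intro j'
    have hinj : Function.Injective (fun S : Cfg 0 => (⟨0, j', S⟩ : HREM.Idx)) := by
      intro a b h
      simpa using h
    have hsub : iIndepFun (fun S : Cfg 0 => ε 0 j' S) μ :=
      HREM.iIndepFun_reindex (fun S : Cfg 0 => (⟨0, j', S⟩ : HREM.Idx)) hinj hindep
    have hmap := HREM.map_pi_gauss (fun S => hmeas 0 j' S) hsub (fun S => hgauss 0 j' S)
    have hg : Measurable (fun x : Cfg 0 → ℝ => Real.log (∑ S : Cfg 0, Real.exp (-β * x S))) := by
      apply Real.measurable_log.comp
      exact Finset.measurable_sum _ fun S _ => by fun_prop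
    rw [← hmap, integral_map (measurable_pi_lambda _ fun S => hmeas 0 j' S).aemeasurable
      hg.aestronglyMeasurable]
    rfl
  rw [key j, key 0]

lemma HREM.step (hmeas : ∀ l j c, Measurable (ε l j c))
    (hgauss : ∀ l j c, μ.map (ε l j c) = gaussianReal 0 1)
    (hindep : iIndepFun (fun q : HREM.Idx => ε q.1 q.2.1 q.2.2) μ)
    (n j : ℕ) :
    ∫ ω, Real.log (HREM.Zn σ ε β (n + 1) j ω) ∂μ
      ≤ β ^ 2 * ((2 : ℝ) ^ (((n : ℝ) + 1) * (1 - σ) / 2)) ^ 2 / 2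
        + ∫ ω, Real.log (HREM.Zn σ ε β n (2 * j) ω) ∂μ
        + ∫ ω, Real.log (HREM.Zn σ ε β n (2 * j + 1) ω) ∂μ := by
  classical
  set c : ℝ := (2 : ℝ) ^ (((n : ℝ) + 1) * (1 - σ) / 2) with hc
  set u : ℝ := -β * c with hu
  set A : Ω → (Cfg (n + 1) → ℝ) := fun ω S =>
    hremH σ ε n (2 * j) (blkL S) ω + hremH σ ε n (2 * j + 1) (blkR S) ω with hA
  set X : Ω → (Cfg (n + 1) → ℝ) := fun ω S => ε (n + 1) j S ω with hX
  set Φ : (Cfg (n + 1) → ℝ) × (Cfg (n + 1) → ℝ) → ℝ := fun p =>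
    Real.log (∑ S : Cfg (n + 1), Real.exp (-β * p.1 S) * Real.exp (u * p.2 S)) with hΦ
  have hAm : Measurable A := measurable_pi_lambda _ fun S =>
    (HREM.hremH_meas hmeas n _ _).add (HREM.hremH_meas hmeas n _ _)
  have hXm : Measurable X := measurable_pi_lambda _ fun S => hmeas _ _ _
  have hΦm : Measurable Φ := by
    apply Real.measurable_log.comp
    apply Finset.measurable_sum
    intro S _
    fun_prop
  have hcomp : (fun ω => Real.log (HREM.Zn σ ε β (n + 1) j ω)) = fun ω => Φ (A ω, X ω) := by
    funext ω
    simp only [HREM.Zn, hΦ]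
    congr 1
    refine Finset.sum_congr rfl fun S _ => ?_
    rw [← Real.exp_add]
    congr 1
    simp only [hremH]
    rw [← hc, hu, hA, hX]
    ring
  have hAlow : Measurable[HREM.lowS ε n] A :=
    @measurable_pi_lambda Ω (Cfg (n + 1)) (fun _ => ℝ) (HREM.lowS ε n) (fun _ => inferInstance) A
      (fun S => Measurable.add (HREM.hremH_meas_low n n le_rfl _ _)
        (HREM.hremH_meas_low n n le_rfl _ _))
  have hXhigh : Measurable[HREM.highS ε n] X :=
    @measurable_pi_lambda Ω (Cfg (n + 1)) (fun _ => ℝ) (HREM.highS ε n) (fun _ => inferInstance) X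
      (fun S => HREM.eps_meas_high (Nat.lt_succ_self n) j S)
  have hAX : IndepFun A X μ := HREM.indep_low_high hmeas hindep n hAlow hXhigh
  have hXpi : μ.map X = Measure.pi fun _ : Cfg (n + 1) => gaussianReal 0 1 := by
    have hinj : Function.Injective (fun S : Cfg (n + 1) => (⟨n + 1, j, S⟩ : HREM.Idx)) :=
      fun a b h => by simpa using h
    exact HREM.map_pi_gauss (fun S => hmeas _ _ _)
      (HREM.iIndepFun_reindex (fun S : Cfg (n + 1) => (⟨n + 1, j, S⟩ : HREM.Idx)) hinj hindep)
      (fun S => hgauss _ _ _)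
  have hpair : AEMeasurable (fun ω => (A ω, X ω)) μ := (hAm.prodMk hXm).aemeasurable
  have hmap : μ.map (fun ω => (A ω, X ω)) = (μ.map A).prod (μ.map X) :=
    (indepFun_iff_map_prod_eq_prod_map_map hAm.aemeasurable hXm.aemeasurable).1 hAX
  have hlogint : Integrable (fun ω => Real.log (HREM.Zn σ ε β (n + 1) j ω)) μ :=
    HREM.integrable_log_Zn hmeas hgauss hindep (n + 1) j
  have hΦint : Integrable Φ ((μ.map A).prod (μ.map X)) := by
    rw [← hmap]
    refine (integrable_map_measure hΦm.aestronglyMeasurable hpair).2 ?_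
    have : (Φ ∘ fun ω => (A ω, X ω)) = fun ω => Real.log (HREM.Zn σ ε β (n + 1) j ω) := by
      rw [hcomp]; rfl
    rw [this]
    exact hlogint
  have hstep1 : ∫ ω, Real.log (HREM.Zn σ ε β (n + 1) j ω) ∂μ
      = ∫ a, ∫ x, Φ (a, x) ∂(μ.map X) ∂(μ.map A) := by
    rw [hcomp, ← integral_map hpair hΦm.aestronglyMeasurable, hmap, integral_prod _ hΦint]
  have hinner : ∀ᵐ a ∂(μ.map A), ∫ x, Φ (a, x) ∂(μ.map X)
      ≤ u ^ 2 / 2 + Real.log (∑ S : Cfg (n + 1), Real.exp (-β * a S)) := by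
    filter_upwards [hΦint.prod_right_ae] with a ha
    have ha' : Integrable (fun x => Φ (a, x)) (Measure.pi fun _ => gaussianReal 0 1) := by
      rw [← hXpi]; exact ha
    have hj := HREM.jensen_gauss (fun S => Real.exp (-β * a S)) (fun S => Real.exp_pos _) u ha'
    rw [hXpi]
    exact hj
  have hgmeas : Measurable (fun a : Cfg (n + 1) → ℝ =>
      Real.log (∑ S : Cfg (n + 1), Real.exp (-β * a S))) := by
    apply Real.measurable_log.comp
    exact Finset.measurable_sum _ fun S _ => by fun_prop
  have hWcomp : ∀ ω, Real.log (∑ S : Cfg (n + 1), Real.exp (-β * A ω S))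
      = Real.log (HREM.Zn σ ε β n (2 * j) ω) + Real.log (HREM.Zn σ ε β n (2 * j + 1) ω) := by
    intro ω
    have hfact : ∑ S : Cfg (n + 1), Real.exp (-β * A ω S)
        = HREM.Zn σ ε β n (2 * j) ω * HREM.Zn σ ε β n (2 * j + 1) ω := by
      have : ∀ S : Cfg (n + 1), Real.exp (-β * A ω S)
          = Real.exp (-β * hremH σ ε n (2 * j) (blkL S) ω)
            * Real.exp (-β * hremH σ ε n (2 * j + 1) (blkR S) ω) := by
        intro S
        rw [← Real.exp_add, hA]
        congr 1
        ring
      rw [Finset.sum_congr rfl fun S _ => this S]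
      simp only [HREM.Zn]
      exact HREM.sum_blk_mul n (fun v => Real.exp (-β * hremH σ ε n (2 * j) v ω))
        (fun v => Real.exp (-β * hremH σ ε n (2 * j + 1) v ω))
    rw [hfact, Real.log_mul (HREM.Zn_pos n _ ω).ne' (HREM.Zn_pos n _ ω).ne']
  have hint1 := HREM.integrable_log_Zn (σ := σ) (β := β) hmeas hgauss hindep n (2 * j)
  have hint2 := HREM.integrable_log_Zn (σ := σ) (β := β) hmeas hgauss hindep n (2 * j + 1)
  have hgint : Integrable (fun a : Cfg (n + 1) → ℝ =>
      Real.log (∑ S : Cfg (n + 1), Real.exp (-β * a S))) (μ.map A) := by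
    refine (integrable_map_measure hgmeas.aestronglyMeasurable hAm.aemeasurable).2 ?_
    have : ((fun a : Cfg (n + 1) → ℝ => Real.log (∑ S : Cfg (n + 1), Real.exp (-β * a S))) ∘ A)
        = fun ω => Real.log (HREM.Zn σ ε β n (2 * j) ω)
          + Real.log (HREM.Zn σ ε β n (2 * j + 1) ω) := funext fun ω => hWcomp ω
    rw [this]
    exact hint1.add hint2
  have houter : ∫ a, ∫ x, Φ (a, x) ∂(μ.map X) ∂(μ.map A)
      ≤ ∫ a, (u ^ 2 / 2 + Real.log (∑ S : Cfg (n + 1), Real.exp (-β * a S))) ∂(μ.map A) := by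
    refine integral_mono_ae hΦint.integral_prod_left ?_ hinner
    simpa using (integrable_const (u ^ 2 / 2) (μ := μ.map A)).add hgint
  have : IsProbabilityMeasure (μ.map A) := Measure.isProbabilityMeasure_map hAm.aemeasurable
  have hfinal : ∫ a, (u ^ 2 / 2 + Real.log (∑ S : Cfg (n + 1), Real.exp (-β * a S))) ∂(μ.map A)
      = u ^ 2 / 2 + (∫ ω, Real.log (HREM.Zn σ ε β n (2 * j) ω) ∂μ
        + ∫ ω, Real.log (HREM.Zn σ ε β n (2 * j + 1) ω) ∂μ) := by
    rw [integral_add (integrable_const _) hgint, integral_const]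
    simp only [probReal_univ, measure_univ, ENNReal.toReal_one, smul_eq_mul, one_mul]
    congr 1
    rw [integral_map hAm.aemeasurable hgmeas.aestronglyMeasurable]
    rw [show (fun ω => Real.log (∑ S : Cfg (n + 1), Real.exp (-β * A ω S)))
      = fun ω => Real.log (HREM.Zn σ ε β n (2 * j) ω)
        + Real.log (HREM.Zn σ ε β n (2 * j + 1) ω) from funext fun ω => hWcomp ω]
    exact integral_add hint1 hint2
  have hu2 : u ^ 2 = β ^ 2 * c ^ 2 := by rw [hu]; ring
  rw [hstep1]
  refine le_trans houter ?_
  rw [hfinal]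
  linarith [hu2.le, hu2.ge]

end Part4
section Part5
open MeasureTheory ProbabilityTheory Real

variable {Ω : Type} [MeasurableSpace Ω] {μ : Measure Ω} {σ β : ℝ}
  {ε : ∀ l : ℕ, ℕ → Cfg l → Ω → ℝ} [IsProbabilityMeasure μ]

lemma HREM.bound_all (hmeas : ∀ l j c, Measurable (ε l j c))
    (hgauss : ∀ l j c, μ.map (ε l j c) = gaussianReal 0 1)
    (hindep : iIndepFun (fun q : HREM.Idx => ε q.1 q.2.1 q.2.2) μ) :
    ∀ n j, ∫ ω, Real.log (HREM.Zn σ ε β n j ω) ∂μ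
      ≤ 2 ^ n * (β ^ 2 / 2 * (∑ m ∈ Finset.range n, (2 : ℝ) ^ (-((m : ℝ) + 1) * σ))
          + ∫ ω, Real.log (HREM.Zn σ ε β 0 0 ω) ∂μ) := by
  intro n
  induction n with
  | zero =>
    intro j
    rw [HREM.log_Z0_eq hmeas hgauss hindep j]
    simp
  | succ n ih =>
    intro j
    have h1 := HREM.step (σ := σ) (β := β) hmeas hgauss hindep n j
    have h2 := ih (2 * j)
    have h3 := ih (2 * j + 1)
    have hkey : β ^ 2 * ((2 : ℝ) ^ (((n : ℝ) + 1) * (1 - σ) / 2)) ^ 2 / 2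
        = 2 ^ (n + 1) * (β ^ 2 / 2 * (2 : ℝ) ^ (-((n : ℝ) + 1) * σ)) := by
      have e1 : ((2 : ℝ) ^ (((n : ℝ) + 1) * (1 - σ) / 2)) ^ 2
          = (2 : ℝ) ^ (((n : ℝ) + 1) * (1 - σ)) := by
        rw [← Real.rpow_natCast ((2 : ℝ) ^ (((n : ℝ) + 1) * (1 - σ) / 2)) 2,
          ← Real.rpow_mul (by norm_num : (0:ℝ) ≤ 2)]
        norm_num
      have e2 : (2 : ℝ) ^ (((n : ℝ) + 1) * (1 - σ))
          = 2 ^ (n + 1) * (2 : ℝ) ^ (-((n : ℝ) + 1) * σ) := by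
        rw [show ((n : ℝ) + 1) * (1 - σ) = ((n : ℝ) + 1) + -((n : ℝ) + 1) * σ by ring,
          Real.rpow_add (by norm_num : (0:ℝ) < 2)]
        congr 1
        rw [show ((n : ℝ) + 1) = ((n + 1 : ℕ) : ℝ) by push_cast; ring, Real.rpow_natCast]
      rw [e1, e2]
      ring
    have hsum := Finset.sum_range_succ (fun m => (2 : ℝ) ^ (-((m : ℝ) + 1) * σ)) n
    have hp : (2 : ℝ) ^ (n + 1) = 2 * 2 ^ n := by ring
    calc ∫ ω, Real.log (HREM.Zn σ ε β (n + 1) j ω) ∂μ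
        ≤ β ^ 2 * ((2 : ℝ) ^ (((n : ℝ) + 1) * (1 - σ) / 2)) ^ 2 / 2
          + ∫ ω, Real.log (HREM.Zn σ ε β n (2 * j) ω) ∂μ
          + ∫ ω, Real.log (HREM.Zn σ ε β n (2 * j + 1) ω) ∂μ := h1
      _ ≤ β ^ 2 * ((2 : ℝ) ^ (((n : ℝ) + 1) * (1 - σ) / 2)) ^ 2 / 2
          + 2 ^ n * (β ^ 2 / 2 * (∑ m ∈ Finset.range n, (2 : ℝ) ^ (-((m : ℝ) + 1) * σ))
            + ∫ ω, Real.log (HREM.Zn σ ε β 0 0 ω) ∂μ)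
          + 2 ^ n * (β ^ 2 / 2 * (∑ m ∈ Finset.range n, (2 : ℝ) ^ (-((m : ℝ) + 1) * σ))
            + ∫ ω, Real.log (HREM.Zn σ ε β 0 0 ω) ∂μ) := by linarith [h2, h3]
      _ = 2 ^ (n + 1) * (β ^ 2 / 2
            * ((∑ m ∈ Finset.range n, (2 : ℝ) ^ (-((m : ℝ) + 1) * σ))
              + (2 : ℝ) ^ (-((n : ℝ) + 1) * σ))
          + ∫ ω, Real.log (HREM.Zn σ ε β 0 0 ω) ∂μ) := by
        rw [hkey]
        ring
      _ = 2 ^ (n + 1) * (β ^ 2 / 2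
            * (∑ m ∈ Finset.range (n + 1), (2 : ℝ) ^ (-((m : ℝ) + 1) * σ))
          + ∫ ω, Real.log (HREM.Zn σ ε β 0 0 ω) ∂μ) := by rw [hsum]

theorem HREM.geom_bound (hσ : 0 < σ) (k : ℕ) :
    (∑ m ∈ Finset.range (k + 1), (2 : ℝ) ^ (-((m : ℝ) + 1) * σ)) ≤ ((2 : ℝ) ^ σ - 1)⁻¹ := by
  set r : ℝ := (2 : ℝ) ^ (-σ) with hr
  have hrpos : 0 < r := Real.rpow_pos_of_pos (by norm_num) _
  have hr1 : r < 1 := Real.rpow_lt_one_of_one_lt_of_neg one_lt_two (neg_lt_zero.2 hσ)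
  have hterm : ∀ m : ℕ, (2 : ℝ) ^ (-((m : ℝ) + 1) * σ) = r ^ (m + 1) := by
    intro m
    rw [hr, ← Real.rpow_natCast ((2 : ℝ) ^ (-σ)) (m + 1),
      ← Real.rpow_mul (by norm_num : (0:ℝ) ≤ 2)]
    congr 1
    push_cast
    ring
  rw [Finset.sum_congr rfl fun m _ => hterm m]
  have hfac : ∑ m ∈ Finset.range (k + 1), r ^ (m + 1)
      = r * ∑ m ∈ Finset.range (k + 1), r ^ m := by
    rw [Finset.mul_sum]
    exact Finset.sum_congr rfl fun m _ => by ring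
  have hne1 : r - 1 ≠ 0 := sub_ne_zero.2 hr1.ne
  have hne2 : (1 : ℝ) - r ≠ 0 := sub_ne_zero.2 hr1.ne'
  have h1r : (0 : ℝ) < 1 - r := by linarith
  have hgs : ∑ m ∈ Finset.range (k + 1), r ^ m ≤ (1 - r)⁻¹ := by
    rw [geom_sum_eq hr1.ne (k + 1)]
    rw [show (r ^ (k + 1) - 1) / (r - 1) = (1 - r ^ (k + 1)) / (1 - r) by
      rw [div_eq_div_iff hne1 hne2]; ring]
    rw [div_le_iff₀ h1r, inv_mul_cancel₀ hne2]
    linarith [pow_nonneg hrpos.le (k + 1)]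
  have h2σ : (1 : ℝ) < (2 : ℝ) ^ σ := by
    rw [show (1 : ℝ) = (2 : ℝ) ^ (0 : ℝ) by simp]
    exact Real.rpow_lt_rpow_left_iff one_lt_two |>.2 hσ
  have h2pos : (0 : ℝ) < (2 : ℝ) ^ σ := Real.rpow_pos_of_pos (by norm_num) σ
  have hfin : r * (1 - r)⁻¹ = ((2 : ℝ) ^ σ - 1)⁻¹ := by
    have hrinv : r = ((2 : ℝ) ^ σ)⁻¹ := by
      rw [hr, Real.rpow_neg (by norm_num : (0:ℝ) ≤ 2)]
    rw [hrinv]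
    rw [show (1 - ((2 : ℝ) ^ σ)⁻¹) = ((2 : ℝ) ^ σ - 1) * ((2 : ℝ) ^ σ)⁻¹ by
      field_simp]
    rw [mul_inv, inv_inv, mul_comm (((2 : ℝ) ^ σ - 1)⁻¹) ((2 : ℝ) ^ σ), ← mul_assoc,
      inv_mul_cancel₀ h2pos.ne', one_mul]
  rw [hfac]
  calc r * ∑ m ∈ Finset.range (k + 1), r ^ m ≤ r * (1 - r)⁻¹ :=
        mul_le_mul_of_nonneg_left hgs hrpos.le
    _ = ((2 : ℝ) ^ σ - 1)⁻¹ := hfin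

end Part5

/-- **Uniform upper bound for the HREM free energy.** For `σ > 0`,
`f_{k+1} ≤ (β²/2)/(2^σ - 1) + E[log Σ_{S=±1} exp(-β ε_0[S])]` for all `k`. -/
theorem hremF_uniform_upper_bound
    (σ β : ℝ) (hσ : 0 < σ) (hβ : 0 ≤ β) (μ : Measure Ω) [IsProbabilityMeasure μ]
    (ε : ∀ l : ℕ, ℕ → Cfg l → Ω → ℝ)
    (hmeas : ∀ l j c, Measurable (ε l j c))
    (hgauss : ∀ l j c, μ.map (ε l j c) = gaussianReal 0 1)
    (hindep : iIndepFun
      (fun q : Σ l : ℕ, ℕ × Cfg l => ε q.1 q.2.1 q.2.2) μ) :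
    ∀ k : ℕ, hremF σ ε μ β (k + 1)
      ≤ β ^ 2 / 2 * ((2 : ℝ) ^ σ - 1)⁻¹
        + ∫ ω, Real.log (∑ S : Cfg 0, Real.exp (-β * ε 0 0 S ω)) ∂μ := by
  intro k
  have hb := HREM.bound_all (σ := σ) (β := β) hmeas hgauss hindep (k + 1) 0
  have hgeom := HREM.geom_bound (σ := σ) hσ k
  have hpow : (0 : ℝ) < 2 ^ (k + 1) := by positivity
  show ((2 : ℝ) ^ (k + 1))⁻¹ * ∫ ω, Real.log (hremZ σ ε β (k + 1) ω) ∂μ ≤ _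
  calc ((2 : ℝ) ^ (k + 1))⁻¹ * ∫ ω, Real.log (hremZ σ ε β (k + 1) ω) ∂μ
      = ((2 : ℝ) ^ (k + 1))⁻¹ * ∫ ω, Real.log (HREM.Zn σ ε β (k + 1) 0 ω) ∂μ := rfl
    _ ≤ ((2 : ℝ) ^ (k + 1))⁻¹ * (2 ^ (k + 1)
          * (β ^ 2 / 2 * (∑ m ∈ Finset.range (k + 1), (2 : ℝ) ^ (-((m : ℝ) + 1) * σ))
            + ∫ ω, Real.log (HREM.Zn σ ε β 0 0 ω) ∂μ)) :=
        mul_le_mul_of_nonneg_left hb (inv_nonneg.2 hpow.le)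
    _ = β ^ 2 / 2 * (∑ m ∈ Finset.range (k + 1), (2 : ℝ) ^ (-((m : ℝ) + 1) * σ))
          + ∫ ω, Real.log (HREM.Zn σ ε β 0 0 ω) ∂μ := inv_mul_cancel_left₀ hpow.ne' _
    _ ≤ β ^ 2 / 2 * ((2 : ℝ) ^ σ - 1)⁻¹
          + ∫ ω, Real.log (HREM.Zn σ ε β 0 0 ω) ∂μ :=
        add_le_add_left (mul_le_mul_of_nonneg_left hgeom (by positivity)) _
    _ = β ^ 2 / 2 * ((2 : ℝ) ^ σ - 1)⁻¹
          + ∫ ω, Real.log (∑ S : Cfg 0, Real.exp (-β * ε 0 0 S ω)) ∂μ := rfl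
end

section
/- For the HREM with σ > 0, the finite-volume entropy satisfies s_{k+1} ≥ f_{k+1} - β·√((2^σ/(2^σ - 1))·2 log 2) for every k and every β ≥ 0. -/
open MeasureTheory ProbabilityTheory Real Filter

variable {Ω : Type} [MeasurableSpace Ω]

/-- The finite-volume entropy of the HREM:
\`s_n = β · 2^{-n} E[⟨H_n[S]⟩] + f_n\`, where \`⟨·⟩\` is the Gibbs average. -/
noncomputable def hremS (σ : ℝ) (ε : ∀ l : ℕ, ℕ → Cfg l → Ω → ℝ) (μ : Measure Ω)
    (β : ℝ) (n : ℕ) : ℝ :=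
  β * ((2 : ℝ) ^ n)⁻¹
      * ∫ ω, (∑ S : Cfg n, hremH σ ε n 0 S ω * Real.exp (-β * hremH σ ε n 0 S ω))
          / hremZ σ ε β n ω ∂μ
    + hremF σ ε μ β n

/-! ### Auxiliary material -/

open scoped NNReal ENNReal

lemma hrem_pdf_shift (c x : ℝ) :
    Real.exp (c * x) * gaussianPDFReal 0 1 x = Real.exp (c^2/2) * gaussianPDFReal c 1 x := by
  simp only [gaussianPDFReal, NNReal.coe_one]
  rw [mul_left_comm, mul_left_comm (Real.exp (c^2/2)), ← Real.exp_add, ← Real.exp_add]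
  congr 2
  ring

lemma integrable_exp_mul_gauss (c : ℝ) :
    Integrable (fun x => Real.exp (c * x)) (gaussianReal 0 1) := by
  rw [gaussianReal_of_var_ne_zero _ one_ne_zero,
    integrable_withDensity_iff (measurable_gaussianPDF _ _)
      (ae_of_all _ fun x => ENNReal.ofReal_lt_top)]
  refine (Integrable.const_mul (integrable_gaussianPDFReal c 1) (Real.exp (c^2/2))).congr ?_
  refine ae_of_all _ fun x => ?_
  simp only [gaussianPDF, ENNReal.toReal_ofReal (gaussianPDFReal_nonneg 0 1 x)]
  exact (hrem_pdf_shift c x).symm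

lemma integral_exp_mul_gauss (c : ℝ) :
    ∫ x, Real.exp (c * x) ∂(gaussianReal 0 1) = Real.exp (c^2/2) := by
  have hd : gaussianPDF 0 1 = fun x => ((Real.toNNReal (gaussianPDFReal 0 1 x) : ℝ≥0) : ℝ≥0∞) :=
    funext fun x => rfl
  rw [gaussianReal_of_var_ne_zero _ one_ne_zero, hd,
    integral_withDensity_eq_integral_smul (measurable_gaussianPDFReal 0 1).real_toNNReal]
  have h : ∀ x : ℝ, Real.toNNReal (gaussianPDFReal 0 1 x) • Real.exp (c * x)
      = Real.exp (c^2/2) * gaussianPDFReal c 1 x := by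
    intro x
    rw [NNReal.smul_def, smul_eq_mul, Real.coe_toNNReal _ (gaussianPDFReal_nonneg 0 1 x),
      mul_comm, hrem_pdf_shift]
  rw [integral_congr_ae (ae_of_all _ h), integral_const_mul,
    integral_gaussianPDFReal_eq_one c one_ne_zero, mul_one]

/-- The index type of the independent standard Gaussians of the HREM. -/
abbrev HIdx : Type := Σ l : ℕ, ℕ × Cfg l

/-- The finset of indices of the Gaussians occurring in `hremH σ ε n j S`. -/
def hremIdx : (n : ℕ) → ℕ → Cfg n → Finset HIdx
  | 0, j, S => {⟨0, j, S⟩}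
  | (n+1), j, S =>
      (hremIdx n (2*j) (blkL S) ∪ hremIdx n (2*j+1) (blkR S)) ∪ {⟨n+1, j, S⟩}

lemma mem_hremIdx : ∀ (n j : ℕ) (S : Cfg n) (q : HIdx), q ∈ hremIdx n j S →
    q.1 ≤ n ∧ j * 2^(n - q.1) ≤ q.2.1 ∧ q.2.1 < (j+1) * 2^(n - q.1)
  | 0, j, S, q, hq => by
    simp only [hremIdx, Finset.mem_singleton] at hq
    subst hq; simp
  | (n+1), j, S, q, hq => by
    simp only [hremIdx, Finset.mem_union, Finset.mem_singleton] at hq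
    rcases hq with (hq | hq) | hq
    · obtain ⟨h1, h2, h3⟩ := mem_hremIdx n (2*j) (blkL S) q hq
      have hE : 2^(n+1-q.1) = 2 * 2^(n-q.1) := by
        rw [show n+1-q.1 = (n-q.1)+1 by omega, pow_succ]; ring
      refine ⟨by omega, ?_, ?_⟩
      · rw [hE]; nlinarith
      · rw [hE]; nlinarith
    · obtain ⟨h1, h2, h3⟩ := mem_hremIdx n (2*j+1) (blkR S) q hq
      have hE : 2^(n+1-q.1) = 2 * 2^(n-q.1) := by
        rw [show n+1-q.1 = (n-q.1)+1 by omega, pow_succ]; ring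
      refine ⟨by omega, ?_, ?_⟩
      · rw [hE]; nlinarith
      · rw [hE]; nlinarith
    · subst hq; simp

lemma hremIdx_disj (n j : ℕ) (S : Cfg (n+1)) :
    Disjoint (hremIdx n (2*j) (blkL S)) (hremIdx n (2*j+1) (blkR S)) := by
  rw [Finset.disjoint_left]
  rintro q hL hR
  obtain ⟨h1, h2, h3⟩ := mem_hremIdx _ _ _ q hL
  obtain ⟨h1', h2', h3'⟩ := mem_hremIdx _ _ _ q hR
  have hpos : 0 < 2^(n - q.1) := Nat.pow_pos (by norm_num)
  nlinarith

lemma hremIdx_not_mem (n j : ℕ) (S : Cfg (n+1)) :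
    (⟨n+1, j, S⟩ : HIdx) ∉ hremIdx n (2*j) (blkL S) ∪ hremIdx n (2*j+1) (blkR S) := by
  intro hq
  rcases Finset.mem_union.1 hq with h | h
  · exact absurd (mem_hremIdx _ _ _ _ h).1 (by simp)
  · exact absurd (mem_hremIdx _ _ _ _ h).1 (by simp)

/-- The coefficient attached to a level-`l` energy. -/
noncomputable def hremA (σ : ℝ) (l : ℕ) : ℝ := (2 : ℝ) ^ ((l : ℝ) * (1 - σ) / 2)

lemma hremH_eq_sum (σ : ℝ) (ε : ∀ l : ℕ, ℕ → Cfg l → Ω → ℝ) :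
    ∀ (n j : ℕ) (S : Cfg n) (ω : Ω), hremH σ ε n j S ω
      = ∑ q ∈ hremIdx n j S, hremA σ q.1 * ε q.1 q.2.1 q.2.2 ω
  | 0, j, S, ω => by
    simp [hremH, hremIdx, hremA]
  | (n+1), j, S, ω => by
    simp only [hremH]
    rw [hremIdx, Finset.sum_union (by
        rw [Finset.disjoint_union_left]
        constructor <;>
        · rw [Finset.disjoint_singleton_right]
          exact fun h => hremIdx_not_mem n j S (Finset.mem_union.2 (by simp [h]))),
      Finset.sum_union (hremIdx_disj n j S), Finset.sum_singleton,
      hremH_eq_sum σ ε n (2*j) (blkL S) ω, hremH_eq_sum σ ε n (2*j+1) (blkR S) ω]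
    dsimp only
    simp only [hremA]
    push_cast
    ring

/-- The variance of `hremH σ ε n j S`. -/
noncomputable def hremV (σ : ℝ) : ℕ → ℝ
  | 0 => 1
  | (n+1) => 2 * hremV σ n + (2:ℝ) ^ (((n:ℝ)+1) * (1 - σ))

lemma hremIdx_sumsq (σ : ℝ) :
    ∀ (n j : ℕ) (S : Cfg n), ∑ q ∈ hremIdx n j S, (hremA σ q.1)^2 = hremV σ n
  | 0, j, S => by simp [hremIdx, hremV, hremA]
  | (n+1), j, S => by
    rw [hremIdx, Finset.sum_union (by
        rw [Finset.disjoint_union_left]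
        constructor <;>
        · rw [Finset.disjoint_singleton_right]
          exact fun h => hremIdx_not_mem n j S (Finset.mem_union.2 (by simp [h]))),
      Finset.sum_union (hremIdx_disj n j S), Finset.sum_singleton,
      hremIdx_sumsq σ n (2*j) (blkL S), hremIdx_sumsq σ n (2*j+1) (blkR S), hremV]
    have h2 : (hremA σ (n+1))^2 = (2:ℝ) ^ (((n:ℝ)+1) * (1 - σ)) := by
      rw [hremA, ← Real.rpow_natCast ((2:ℝ) ^ _) 2, ← Real.rpow_mul (by norm_num)]
      congr 1
      push_cast
      ring
    dsimp only
    rw [h2]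
    ring

lemma hremH_measurable (σ : ℝ) (ε : ∀ l : ℕ, ℕ → Cfg l → Ω → ℝ)
    (hmeas : ∀ l j c, Measurable (ε l j c)) (n : ℕ) : ∀ (j : ℕ) (S : Cfg n),
    Measurable (fun ω => hremH σ ε n j S ω) := by
  induction n with
  | zero => exact fun j S => hmeas 0 j S
  | succ n ih =>
    exact fun j S => ((ih _ _).add (ih _ _)).add ((hmeas _ _ _).const_mul _)

lemma hremV_le (σ : ℝ) (hσ : 0 < σ) (n : ℕ) :
    hremV σ n ≤ 2^n * ((2:ℝ)^σ / ((2:ℝ)^σ - 1)) := by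
  set C := (2:ℝ)^σ/((2:ℝ)^σ-1) with hCdef
  have h1 : (1:ℝ) < (2:ℝ)^σ := Real.one_lt_rpow_iff_of_pos two_pos |>.2 (Or.inl ⟨one_lt_two, hσ⟩)
  set r := (2:ℝ)^(-σ) with hrdef
  have hr0 : 0 < r := Real.rpow_pos_of_pos two_pos _
  have hr1 : r < 1 := by
    rw [hrdef, Real.rpow_neg (by norm_num)]
    exact inv_lt_one_of_one_lt₀ h1
  have hC : C * (1 - r) = 1 := by
    have h2 : (2:ℝ)^σ ≠ 0 := by positivity
    have h3 : (2:ℝ)^σ - 1 ≠ 0 := by linarith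
    rw [hCdef, hrdef, Real.rpow_neg (by norm_num)]
    field_simp
  have hC0 : 0 < C := by
    rw [hCdef]
    exact div_pos (by positivity) (by linarith)
  have key : ∀ m, hremV σ m = 2^m * C * (1 - r^(m+1)) := by
    intro m
    induction m with
    | zero => simp [hremV]; linarith [hC]
    | succ m ih =>
      have hpow : (2:ℝ) ^ (((m:ℝ)+1) * (1 - σ)) = 2^(m+1) * r^(m+1) := by
        rw [hrdef, ← Real.rpow_natCast ((2:ℝ)^(-σ)) (m+1), ← Real.rpow_mul (by norm_num),
          ← Real.rpow_natCast (2:ℝ) (m+1), ← Real.rpow_add two_pos]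
        congr 1
        push_cast
        ring
      rw [hremV, ih, hpow]
      linear_combination (-(2:ℝ)^(m+1) * r^(m+1)) * hC
  rw [key n]
  nlinarith [mul_pos (mul_pos (show (0:ℝ) < 2^n by positivity) hC0) (pow_pos hr0 (n+1))]

lemma hremH_mgf (σ : ℝ) (μ : Measure Ω) [IsProbabilityMeasure μ]
    (ε : ∀ l : ℕ, ℕ → Cfg l → Ω → ℝ)
    (hmeas : ∀ l j c, Measurable (ε l j c))
    (hgauss : ∀ l j c, μ.map (ε l j c) = gaussianReal 0 1)
    (hindep : iIndepFun
      (fun q : HIdx => ε q.1 q.2.1 q.2.2) μ)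
    (n j : ℕ) (S : Cfg n) (t : ℝ) :
    Integrable (fun ω => Real.exp (t * hremH σ ε n j S ω)) μ ∧
      ∫ ω, Real.exp (t * hremH σ ε n j S ω) ∂μ = Real.exp (t^2 * hremV σ n / 2) := by
  set X : HIdx → Ω → ℝ :=
    fun q => (fun x => hremA σ q.1 * x) ∘ (fun ω => ε q.1 q.2.1 q.2.2 ω) with hX
  have hXmeas : ∀ q, Measurable (X q) := fun q => (measurable_const_mul _).comp (hmeas _ _ _)
  have hXindep : iIndepFun X μ :=
    hindep.comp (fun q x => hremA σ q.1 * x) (fun q => measurable_const_mul _)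
  have hcomp : ∀ (q : HIdx) (u : ℝ), (fun ω => Real.exp (u * X q ω))
      = (fun x : ℝ => Real.exp ((u * hremA σ q.1) * x)) ∘ (ε q.1 q.2.1 q.2.2) := by
    intro q u
    funext ω
    simp only [hX, Function.comp_apply]
    rw [← mul_assoc]
  have hXint : ∀ (q : HIdx) (u : ℝ), Integrable (fun ω => Real.exp (u * X q ω)) μ := by
    intro q u
    rw [hcomp q u]
    refine (integrable_map_measure ?_ (hmeas q.1 q.2.1 q.2.2).aemeasurable).1 ?_
    · exact (Real.continuous_exp.comp (continuous_const.mul continuous_id)).aestronglyMeasurable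
    · rw [hgauss]; exact integrable_exp_mul_gauss _
  have hXmgf : ∀ (q : HIdx) (u : ℝ), mgf (X q) μ u = Real.exp ((u * hremA σ q.1)^2 / 2) := by
    intro q u
    have hmg : mgf (X q) μ u = ∫ ω, Real.exp (u * X q ω) ∂μ := rfl
    have hms : AEStronglyMeasurable (fun x : ℝ => Real.exp ((u * hremA σ q.1) * x))
        (μ.map (ε q.1 q.2.1 q.2.2)) :=
      (Real.measurable_exp.comp (measurable_id.const_mul _)).aestronglyMeasurable
    have h3 : ∫ x, Real.exp ((u * hremA σ q.1) * x) ∂(μ.map (ε q.1 q.2.1 q.2.2))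
        = Real.exp ((u * hremA σ q.1)^2/2) := by
      rw [hgauss]; exact integral_exp_mul_gauss _
    have h2 : ∫ x, Real.exp ((u * hremA σ q.1) * x) ∂(μ.map (ε q.1 q.2.1 q.2.2))
        = integral μ ((fun x => Real.exp ((u * hremA σ q.1) * x)) ∘ ε q.1 q.2.1 q.2.2) :=
      integral_map (hmeas _ _ _).aemeasurable hms
    rw [hmg, hcomp q u, ← h2, h3]
  have hrep : ∀ ω, hremH σ ε n j S ω = (∑ q ∈ hremIdx n j S, X q) ω := by
    intro ω
    rw [Finset.sum_apply, hremH_eq_sum σ ε n j S ω]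
    rfl
  constructor
  · have h := hXindep.integrable_exp_mul_sum hXmeas (s := hremIdx n j S)
      (fun q _ => hXint q t)
    refine h.congr (ae_of_all _ fun ω => ?_)
    simp only
    rw [hrep]
  · have hL : ∫ ω, Real.exp (t * hremH σ ε n j S ω) ∂μ
        = mgf (∑ q ∈ hremIdx n j S, X q) μ t := by
      refine Eq.trans (integral_congr_ae (ae_of_all _ fun ω => ?_)) rfl
      simp only
      rw [hrep]
    rw [hL, hXindep.mgf_sum hXmeas (hremIdx n j S),
      Finset.prod_congr rfl (fun q _ => hXmgf q t), ← Real.exp_sum]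
    congr 1
    have : ∀ q : HIdx, (t * hremA σ q.1)^2 / 2 = (t^2/2) * (hremA σ q.1)^2 := by
      intro q; ring
    rw [Finset.sum_congr rfl (fun q _ => this q), ← Finset.mul_sum, hremIdx_sumsq]
    ring

/-- **Lower bound on the finite-volume entropy of the HREM.** For `σ > 0`,
`s_{k+1} ≥ f_{k+1} - β √((2^σ/(2^σ-1)) · 2 log 2)` for every `k` and every `β ≥ 0`. -/
theorem hremS_lower_bound
    (σ β : ℝ) (hσ : 0 < σ) (hβ : 0 ≤ β) (μ : Measure Ω) [IsProbabilityMeasure μ]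
    (ε : ∀ l : ℕ, ℕ → Cfg l → Ω → ℝ)
    (hmeas : ∀ l j c, Measurable (ε l j c))
    (hgauss : ∀ l j c, μ.map (ε l j c) = gaussianReal 0 1)
    (hindep : iIndepFun
      (fun q : Σ l : ℕ, ℕ × Cfg l => ε q.1 q.2.1 q.2.2) μ) :
    ∀ k : ℕ, hremS σ ε μ β (k + 1)
      ≥ hremF σ ε μ β (k + 1)
        - β * Real.sqrt ((2 : ℝ) ^ σ / ((2 : ℝ) ^ σ - 1) * (2 * Real.log 2)) := by
  intro k
  classical
  set n := k + 1 with hn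
  set C := (2:ℝ)^σ/((2:ℝ)^σ-1) with hCdef
  have h1 : (1:ℝ) < (2:ℝ)^σ := Real.one_lt_rpow_iff_of_pos two_pos |>.2 (Or.inl ⟨one_lt_two, hσ⟩)
  have hC0 : 0 < C := div_pos (by positivity) (by linarith)
  have hlog2 : 0 < Real.log 2 := Real.log_pos one_lt_two
  set D := Real.sqrt (C * (2 * Real.log 2)) with hDdef
  have hD0 : 0 ≤ D := Real.sqrt_nonneg _
  set t := Real.sqrt (2 * Real.log 2 / C) with htdef
  have ht0 : 0 < t := Real.sqrt_pos.2 (by positivity)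
  have ht2 : t^2 = 2 * Real.log 2 / C := by rw [htdef]; exact Real.sq_sqrt (by positivity)
  clear_value C D t
  set Hf : Cfg n → Ω → ℝ := fun S ω => hremH σ ε n 0 S ω with hHf
  have hmgf := fun (S : Cfg n) (u : ℝ) => hremH_mgf σ μ ε hmeas hgauss hindep n 0 S u
  have hHmeas : ∀ S : Cfg n, Measurable (Hf S) := fun S => hremH_measurable σ ε hmeas n 0 S
  set W : Ω → ℝ := fun ω => ∑ S : Cfg n, Real.exp (-t * Hf S ω) with hWdef
  have hWpos : ∀ ω, 0 < W ω :=
    fun ω => Finset.sum_pos (fun S _ => Real.exp_pos _) Finset.univ_nonempty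
  have hWmeas : Measurable W :=
    Finset.measurable_sum _ (fun S _ => ((hHmeas S).const_mul (-t)).exp)
  have hWint : Integrable W μ := integrable_finset_sum _ (fun S _ => (hmgf S (-t)).1)
  set N := (Fintype.card (Cfg n) : ℝ) with hNdef
  have hNpos : 0 < N := by rw [hNdef]; exact_mod_cast Fintype.card_pos
  set V := hremV σ n with hVdef
  set M := N * Real.exp (t^2 * V / 2) with hMdef
  have hM0 : 0 < M := mul_pos hNpos (Real.exp_pos _)
  have hWM : ∫ ω, W ω ∂μ = M := by
    rw [hWdef, integral_finset_sum _ (fun S _ => (hmgf S (-t)).1)]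
    have h : ∀ S : Cfg n, ∫ ω, Real.exp (-t * Hf S ω) ∂μ = Real.exp (t^2 * V / 2) := by
      intro S
      rw [(hmgf S (-t)).2]
      congr 1
      rw [hVdef]
      ring
    rw [Finset.sum_congr rfl (fun S _ => h S), Finset.sum_const, Finset.card_univ, hMdef, hNdef]
    simp [nsmul_eq_mul]
  have hlogN : Real.log N = 2^n * Real.log 2 := by
    rw [hNdef]
    have hcard : Fintype.card (Cfg n) = 2^(2^n) := by
      simp [Fintype.card_fun]
    rw [hcard]
    push_cast
    rw [Real.log_pow]
    push_cast
    ring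
  have hZpos : ∀ ω, 0 < hremZ σ ε β n ω :=
    fun ω => Finset.sum_pos (fun S _ => Real.exp_pos _) Finset.univ_nonempty
  have hGlb : ∀ ω, -(1/t) * Real.log (W ω)
      ≤ (∑ S : Cfg n, Hf S ω * Real.exp (-β * Hf S ω)) / hremZ σ ε β n ω := by
    intro ω
    have hmin : ∀ S : Cfg n, -(1/t) * Real.log (W ω) ≤ Hf S ω := by
      intro S
      have h1' : Real.exp (-t * Hf S ω) ≤ W ω :=
        Finset.single_le_sum (f := fun S' => Real.exp (-t * Hf S' ω))
          (fun S' _ => (Real.exp_pos _).le) (Finset.mem_univ S)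
      have h2 : -t * Hf S ω ≤ Real.log (W ω) := (Real.le_log_iff_exp_le (hWpos ω)).2 h1'
      have h3 : -(Hf S ω) ≤ Real.log (W ω) / t := (le_div_iff₀ ht0).2 (by nlinarith)
      have h4 : -(1/t) * Real.log (W ω) = -(Real.log (W ω) / t) := by ring
      linarith
    rw [le_div_iff₀ (hZpos ω)]
    calc -(1/t) * Real.log (W ω) * hremZ σ ε β n ω
        = ∑ S : Cfg n, -(1/t) * Real.log (W ω) * Real.exp (-β * Hf S ω) := by
          rw [hremZ, Finset.mul_sum]
      _ ≤ ∑ S : Cfg n, Hf S ω * Real.exp (-β * Hf S ω) :=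
          Finset.sum_le_sum (fun S _ =>
            mul_le_mul_of_nonneg_right (hmin S) (Real.exp_pos _).le)
  obtain ⟨S₀⟩ : Nonempty (Cfg n) := inferInstance
  have hεint : ∀ q : HIdx, Integrable (fun ω => ε q.1 q.2.1 q.2.2 ω) μ := by
    intro q
    have hid : Integrable (fun x : ℝ => x) (gaussianReal 0 1) := by
      refine Integrable.mono' ((integrable_exp_mul_gauss 1).add (integrable_exp_mul_gauss (-1)))
        measurable_id.aestronglyMeasurable (ae_of_all _ fun x => ?_)
      simp only [Pi.add_apply]
      rw [Real.norm_eq_abs]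
      rcases le_total 0 x with h | h
      · rw [abs_of_nonneg h]
        have h5 := Real.add_one_le_exp (1 * x)
        have h6 := (Real.exp_pos (-1 * x)).le
        nlinarith
      · rw [abs_of_nonpos h]
        have h5 := Real.add_one_le_exp (-1 * x)
        have h6 := (Real.exp_pos (1 * x)).le
        nlinarith
    exact (integrable_map_measure aestronglyMeasurable_id
      (hmeas q.1 q.2.1 q.2.2).aemeasurable).1 (by rw [hgauss]; exact hid)
  have hH0int : Integrable (Hf S₀) μ := by
    have h : Hf S₀ = fun ω => ∑ q ∈ hremIdx n 0 S₀, hremA σ q.1 * ε q.1 q.2.1 q.2.2 ω :=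
      funext fun ω => hremH_eq_sum σ ε n 0 S₀ ω
    rw [h]
    exact integrable_finset_sum _ (fun q _ => (hεint q).const_mul _)
  have hub : ∀ ω, Real.log (W ω) ≤ Real.log M + W ω / M - 1 := by
    intro ω
    have h := Real.log_le_sub_one_of_pos (div_pos (hWpos ω) hM0)
    rw [Real.log_div (hWpos ω).ne' hM0.ne'] at h
    linarith
  have hlb : ∀ ω, -t * Hf S₀ ω ≤ Real.log (W ω) := fun ω =>
    (Real.le_log_iff_exp_le (hWpos ω)).2
      (Finset.single_le_sum (f := fun S' => Real.exp (-t * Hf S' ω))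
        (fun S' _ => (Real.exp_pos _).le) (Finset.mem_univ S₀))
  have haddint : Integrable (fun ω => Real.log M + W ω / M) μ := by
    exact (integrable_const (Real.log M)).add (hWint.div_const M)
  have hubint : Integrable (fun ω => Real.log M + W ω / M - 1) μ := by
    exact haddint.sub (integrable_const 1)
  have hlbint : Integrable (fun ω => -t * Hf S₀ ω) μ := hH0int.const_mul _
  have hlogWint : Integrable (fun ω => Real.log (W ω)) μ := by
    refine Integrable.mono' (g := fun ω => |(-t) * Hf S₀ ω| + |Real.log M + W ω / M - 1|)
      (hlbint.abs.add hubint.abs) hWmeas.log.aestronglyMeasurable (ae_of_all _ fun ω => ?_)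
    rw [Real.norm_eq_abs, abs_le]
    constructor
    · have h5 := neg_abs_le (-t * Hf S₀ ω)
      have h6 := abs_nonneg (Real.log M + W ω / M - 1)
      linarith [hlb ω]
    · have h5 := le_abs_self (Real.log M + W ω / M - 1)
      have h6 := abs_nonneg (-t * Hf S₀ ω)
      linarith [hub ω]
  have hintlogW : ∫ ω, Real.log (W ω) ∂μ ≤ Real.log M := by
    have h := integral_mono hlogWint hubint (fun ω => hub ω)
    have h2 : ∫ ω, (Real.log M + W ω / M - 1) ∂μ = Real.log M := by
      rw [integral_sub haddint (integrable_const 1),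
        integral_add (integrable_const _) (hWint.div_const M), integral_div, hWM,
        div_self hM0.ne']
      simp
    linarith
  have hVle : V ≤ 2^n * C := by rw [hVdef, hCdef]; exact hremV_le σ hσ n
  have htC : t * C = D := by
    have h9 : (t*C)^2 = C * (2*Real.log 2) := by
      rw [mul_pow, ht2]
      field_simp
    have h10 : 0 ≤ t * C := mul_nonneg ht0.le hC0.le
    rw [hDdef, ← h9, Real.sqrt_sq h10]
  have hlogt : Real.log 2 / t = t * C / 2 := by
    rw [div_eq_iff ht0.ne']
    have h9 : t^2 * C = 2 * Real.log 2 := by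
      rw [ht2]
      exact div_mul_cancel₀ _ hC0.ne'
    linear_combination (-1/2 : ℝ) * h9
  have harith : (1/t) * Real.log M ≤ 2^n * D := by
    rw [hMdef, Real.log_mul hNpos.ne' (Real.exp_pos _).ne', Real.log_exp, hlogN]
    calc (1/t) * (2^n * Real.log 2 + t^2 * V / 2)
        ≤ (1/t) * (2^n * Real.log 2 + t^2 * (2^n * C) / 2) := by
          refine mul_le_mul_of_nonneg_left ?_ (one_div_pos.2 ht0).le
          have h := mul_le_mul_of_nonneg_left hVle (sq_nonneg t)
          linarith
      _ = 2^n * (Real.log 2 / t + t^2 * C / (2*t)) := by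
          field_simp
      _ = 2^n * D := by
          rw [hlogt, ← htC]
          field_simp
          ring
  have hkey : -(2^n * D) ≤ ∫ ω, (∑ S : Cfg n, Hf S ω * Real.exp (-β * Hf S ω))
      / hremZ σ ε β n ω ∂μ := by
    by_cases hInt : Integrable (fun ω => (∑ S : Cfg n, Hf S ω * Real.exp (-β * Hf S ω))
      / hremZ σ ε β n ω) μ
    · have h1' : ∫ ω, -(1/t) * Real.log (W ω) ∂μ
          ≤ ∫ ω, (∑ S : Cfg n, Hf S ω * Real.exp (-β * Hf S ω)) / hremZ σ ε β n ω ∂μ :=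
        integral_mono (hlogWint.const_mul _) hInt (fun ω => hGlb ω)
      have h2 : ∫ ω, -(1/t) * Real.log (W ω) ∂μ = -(1/t) * ∫ ω, Real.log (W ω) ∂μ :=
        integral_const_mul _ _
      have hpos : 0 < 1/t := one_div_pos.2 ht0
      have h3 := mul_le_mul_of_nonneg_left hintlogW hpos.le
      linarith
    · rw [integral_undef hInt]
      have h : (0:ℝ) ≤ 2^n * D := mul_nonneg (by positivity) hD0
      linarith
  show hremS σ ε μ β n ≥ hremF σ ε μ β n - β * D
  rw [hremS]
  have hb : β * ((2:ℝ)^n)⁻¹ * (∫ ω, (∑ S : Cfg n, hremH σ ε n 0 S ω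
      * Real.exp (-β * hremH σ ε n 0 S ω)) / hremZ σ ε β n ω ∂μ) ≥ -(β * D) := by
    have h5 : ((2:ℝ)^n)⁻¹ * (-(2^n * D)) ≤ ((2:ℝ)^n)⁻¹
        * ∫ ω, (∑ S : Cfg n, Hf S ω * Real.exp (-β * Hf S ω)) / hremZ σ ε β n ω ∂μ :=
      mul_le_mul_of_nonneg_left hkey (by positivity)
    have h6 : ((2:ℝ)^n)⁻¹ * (-(2^n * D)) = -D := by
      field_simp
    have h7 : -D ≤ ((2:ℝ)^n)⁻¹
        * ∫ ω, (∑ S : Cfg n, Hf S ω * Real.exp (-β * Hf S ω)) / hremZ σ ε β n ω ∂μ := by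
      linarith
    have h8 := mul_le_mul_of_nonneg_left h7 hβ
    calc β * ((2:ℝ)^n)⁻¹ * (∫ ω, (∑ S : Cfg n, hremH σ ε n 0 S ω
          * Real.exp (-β * hremH σ ε n 0 S ω)) / hremZ σ ε β n ω ∂μ)
        = β * (((2:ℝ)^n)⁻¹
          * ∫ ω, (∑ S : Cfg n, Hf S ω * Real.exp (-β * Hf S ω)) / hremZ σ ε β n ω ∂μ) := by
          ring
      _ ≥ β * (-D) := h8
      _ = -(β * D) := by ring
  linarith [hb]
end
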